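/- Let B be a braided category and let E be a braided module structure on B over itself. Then E is automatically stable in a canonical way: setting ς_X := ρ_X ∘ E_{X,𝟙} ∘ ρ_X⁻¹ (the component of E at the monoidal unit, transported along the right unitor), ς is a natural automorphism of the identity functor of B and E_{X,M} = ς_{X⊗M} ∘ (𝟙_X ⊗ ς_M)⁻¹ for all objects X, M (suppressing associators). -/

import Mathlib

open CategoryTheory MonoidalCategory

variable {B : Type*} [Category B] [MonoidalCategory B] [BraidedCategory B]

/-- A braided module structure on `B` over itself (action `X·M := X⊗M`): a family of
isomorphisms `E_{X,M} : X⊗M → X⊗M`, natural in `X` and `M`, satisfying (C1) and (C2). -/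
def IsBraidedModuleSelf (E : ∀ X M : B, X ⊗ M ⟶ X ⊗ M) : Prop :=
  (∀ X M : B, IsIso (E X M)) ∧
  (∀ {X X' M M' : B} (f : X ⟶ X') (g : M ⟶ M'),
      (f ⊗ₘ g) ≫ E X' M' = E X M ≫ (f ⊗ₘ g)) ∧
  -- (C1): `E_{Y,X⊗M} = ((τ_{Y,X})⁻¹ ⊗ 𝟙_M) ∘ (𝟙_X ⊗ E_{Y,M}) ∘ ((τ_{X,Y})⁻¹ ⊗ 𝟙_M)`
  -- as endomorphisms of `Y⊗X⊗M` (with associators made explicit).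
  (∀ X Y M : B,
      E Y (X ⊗ M) =
        (α_ Y X M).inv ≫ ((β_ X Y).inv ▷ M) ≫ (α_ X Y M).hom ≫
          (X ◁ E Y M) ≫ (α_ X Y M).inv ≫ ((β_ Y X).inv ▷ M) ≫ (α_ Y X M).hom) ∧
  -- (C2): `E_{Y⊗X,M} = E_{Y,X⊗M} ∘ (𝟙_Y ⊗ E_{X,M})`
  (∀ X Y M : B,
      E (Y ⊗ X) M =
        (α_ Y X M).hom ≫ (Y ◁ E X M) ≫ E Y (X ⊗ M) ≫ (α_ Y X M).inv)

/-- The component of `E` at the monoidal unit, transported along the right unitor: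
`ς_X := ρ_X ∘ E_{X,𝟙} ∘ ρ_X⁻¹`. -/
def antiTwistOfBraidedModuleSelf (E : ∀ X M : B, X ⊗ M ⟶ X ⊗ M) : ∀ X : B, X ⟶ X :=
  fun X => (ρ_ X).inv ≫ E X (𝟙_ B) ≫ (ρ_ X).hom

/-- A braided module structure `E` on `B` over itself is automatically stable in a
canonical way: `ς_X := ρ_X ∘ E_{X,𝟙} ∘ ρ_X⁻¹` is a natural automorphism of the identity
functor and `E_{X,M} = ς_{X⊗M} ∘ (𝟙_X ⊗ ς_M)⁻¹` (equivalently,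
`E_{X,M} ∘ (𝟙_X ⊗ ς_M) = ς_{X⊗M}`) for all `X, M`. -/
theorem braidedModuleSelf_stable (E : ∀ X M : B, X ⊗ M ⟶ X ⊗ M)
    (hE : IsBraidedModuleSelf E) :
    (∀ X : B, IsIso (antiTwistOfBraidedModuleSelf E X)) ∧
    (∀ {X Y : B} (f : X ⟶ Y),
      antiTwistOfBraidedModuleSelf E X ≫ f = f ≫ antiTwistOfBraidedModuleSelf E Y) ∧
    (∀ X M : B,
      (X ◁ antiTwistOfBraidedModuleSelf E M) ≫ E X M
        = antiTwistOfBraidedModuleSelf E (X ⊗ M)) := by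
  obtain ⟨hiso, hnat, _hC1, hC2⟩ := hE
  refine ⟨?_, ?_, ?_⟩
  · intro X
    have := hiso X (𝟙_ B)
    unfold antiTwistOfBraidedModuleSelf
    infer_instance
  · intro X Y f
    have h := hnat f (𝟙 (𝟙_ B))
    simp only [tensorHom_id] at h
    unfold antiTwistOfBraidedModuleSelf
    have h1 : (ρ_ X).hom ≫ f = (f ▷ 𝟙_ B) ≫ (ρ_ Y).hom := by simp
    rw [Category.assoc, Category.assoc, h1, ← Category.assoc (E X (𝟙_ B)), ← h,
      ← Category.assoc, ← Category.assoc]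
    have h2 : (ρ_ X).inv ≫ (f ▷ 𝟙_ B) = f ≫ (ρ_ Y).inv := by simp
    rw [h2]
    simp
  · intro X M
    unfold antiTwistOfBraidedModuleSelf
    have hnatM := hnat (𝟙 X) (ρ_ M).hom
    simp only [id_tensorHom] at hnatM
    -- E X (M ⊗ 𝟙) = (X ◁ ρ) ≫ E X M ≫ (X ◁ ρ⁻¹)
    have hEX : E X (M ⊗ 𝟙_ B) = (X ◁ (ρ_ M).hom) ≫ E X M ≫ (X ◁ (ρ_ M).inv) := by
      rw [← Category.assoc, hnatM]; simp
    rw [hC2 M X (𝟙_ B), hEX]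
    have c1 : (ρ_ (X ⊗ M)).inv ≫ (α_ X M (𝟙_ B)).hom = X ◁ (ρ_ M).inv := by
      monoidal
    have c2 : (X ◁ (ρ_ M).inv) ≫ (α_ X M (𝟙_ B)).inv ≫ (ρ_ (X ⊗ M)).hom = 𝟙 _ := by
      monoidal
    simp only [MonoidalCategory.whiskerLeft_comp, Category.assoc]
    rw [← Category.assoc (ρ_ (X ⊗ M)).inv, c1, c2]
    simp
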